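/- Every directed functional extension *X of X, endowed with the Star-topology, has X as a dense subset: any Star-closed set containing X equals *X. (It suffices to show: if X ⊆ E(f₁,…,fₙ; η₁,…,ηₙ) := { ξ ∈ *X : ∃ i, *fᵢ(ξ)=ηᵢ }, then E(f₁,…,fₙ;η₁,…,ηₙ) = *X.) -/

import Mathlib

open Classical in
/-- A functional extension of a set `X` (with distinguished elements `0, 1`):
a superset `S ⊇ X` (given by the injection `inc`) together with a distinguished
extension `star f : S → S` of each `f : X → X`, satisfying `(comp)` and `(diag)`. -/
structure FunExt (X : Type*) (S : Type*) where
  inc : X → S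
  inc_inj : Function.Injective inc
  zero : X
  one : X
  one_ne_zero : one ≠ zero
  star : (X → X) → S → S
  star_extends : ∀ (f : X → X) (x : X), star f (inc x) = inc (f x)
  comp : ∀ (f g : X → X) (ξ : S), star g (star f ξ) = star (g ∘ f) ξ
  diag : ∀ (f g : X → X) (ξ : S),
    star (fun x => if f x = g x then one else zero) ξ =
      if star f ξ = star g ξ then inc one else inc zero

namespace FunExt

variable {X S : Type*}

open Classical in
/-- The characteristic function `χ_A : X → X` of a subset `A ⊆ X`. -/
noncomputable def chi (E : FunExt X S) (A : Set X) : X → X :=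
  fun x => if x ∈ A then E.one else E.zero

/-- The extension `*A ⊆ S` of a subset `A ⊆ X`, defined via `*χ_A`. -/
def starSet (E : FunExt X S) (A : Set X) : Set S :=
  { ξ | E.star (E.chi A) ξ = E.inc E.one }

/-- A functional extension is irredundant if every point is in the range of some `*f`. -/
def Irredundant (E : FunExt X S) : Prop :=
  ∀ ξ : S, ∃ (f : X → X) (η : S), E.star f η = ξ

/-- A functional extension is directed `(dir)`. -/
def Directed (E : FunExt X S) : Prop :=
  ∀ ξ η : S, ∃ (f g : X → X) (ζ : S), E.star f ζ = ξ ∧ E.star g ζ = η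

end FunExt

open Classical FunExt

section Aux

variable {X S : Type*} (E : FunExt X S)

lemma star_const_one (ξ : S) : E.star (fun _ => E.one) ξ = E.inc E.one := by
  have h := E.diag id id ξ
  simpa using h

lemma star_const (c : X) (ξ : S) : E.star (fun _ => c) ξ = E.inc c := by
  have h := E.comp (fun _ => E.one) (fun _ => c) ξ
  rw [star_const_one E ξ, E.star_extends] at h
  exact h.symm.trans rfl

lemma star_id (hdir : E.Directed) (ξ : S) : E.star id ξ = ξ := by
  obtain ⟨g, h, ζ, hg, -⟩ := hdir ξ ξ
  rw [← hg, E.comp, Function.id_comp]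

/-- If the fixed-point set of `u` is exactly `A`, then `*χ_A` is computed by `diag u id`. -/
lemma chi_eq_diag (hdir : E.Directed) (A : Set X) (u : X → X)
    (hu : ∀ x, u x = x ↔ x ∈ A) (ξ : S) :
    E.star (E.chi A) ξ = if E.star u ξ = ξ then E.inc E.one else E.inc E.zero := by
  have hfun : E.chi A = fun x => if u x = id x then E.one else E.zero := by
    funext x
    simp only [FunExt.chi, id_eq, hu x]
  rw [hfun, E.diag, star_id E hdir]

end Aux

section Aux2

variable {X S : Type*} (E : FunExt X S)

/-- A fixed-point-free map built from `zero` and `one`. -/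
noncomputable def sigE (E : FunExt X S) : X → X :=
  fun x => if x = E.zero then E.one else E.zero

lemma sig_ne (x : X) : sigE E x ≠ x := by
  unfold sigE
  split_ifs with h
  · rw [h]; exact E.one_ne_zero
  · exact fun hc => h hc.symm

include E in
lemma exists_repr (A : Set X) : ∃ u : X → X, ∀ x, u x = x ↔ x ∈ A := by
  refine ⟨fun x => if x ∈ A then x else sigE E x, fun x => ?_⟩
  simp only []
  constructor
  · intro h
    by_contra hA
    rw [if_neg hA] at h
    exact sig_ne E x h
  · intro h; rw [if_pos h]

lemma star_chi_mem_or (hdir : E.Directed) (A : Set X) (ξ : S) :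
    E.star (E.chi A) ξ = E.inc E.one ∨ E.star (E.chi A) ξ = E.inc E.zero := by
  obtain ⟨u, hu⟩ := exists_repr E A
  rw [chi_eq_diag E hdir A u hu ξ]
  split_ifs
  · exact Or.inl rfl
  · exact Or.inr rfl

lemma ne_inc_one_zero : E.inc E.one ≠ E.inc E.zero :=
  fun h => E.one_ne_zero (E.inc_inj h)

lemma star_chi_empty (ξ : S) : E.star (E.chi (∅ : Set X)) ξ = E.inc E.zero := by
  have : E.chi (∅ : Set X) = fun _ => E.zero := by
    funext x; simp [FunExt.chi]
  rw [this, star_const]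

lemma star_chi_univ (ξ : S) : E.star (E.chi (Set.univ : Set X)) ξ = E.inc E.one := by
  have : E.chi (Set.univ : Set X) = fun _ => E.one := by
    funext x; simp [FunExt.chi]
  rw [this, star_const]

open Classical in
lemma star_chi_compl_of_zero (A : Set X) (ξ : S)
    (h : E.star (E.chi A) ξ = E.inc E.zero) :
    E.star (E.chi Aᶜ) ξ = E.inc E.one := by
  classical
  set ν : X → X := fun t => if t = E.one then E.zero else E.one with hν
  have hfun : E.chi Aᶜ = ν ∘ E.chi A := by
    funext x
    by_cases hx : x ∈ A
    · simp [FunExt.chi, hν, hx]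
    · simp [FunExt.chi, hν, hx, E.one_ne_zero.symm]
  rw [hfun, ← E.comp, h, E.star_extends]
  simp [hν, E.one_ne_zero.symm]

open Classical in
lemma star_chi_compl_of_one (A : Set X) (ξ : S)
    (h : E.star (E.chi A) ξ = E.inc E.one) :
    E.star (E.chi Aᶜ) ξ = E.inc E.zero := by
  classical
  set ν : X → X := fun t => if t = E.one then E.zero else E.one with hν
  have hfun : E.chi Aᶜ = ν ∘ E.chi A := by
    funext x
    by_cases hx : x ∈ A
    · simp [FunExt.chi, hν, hx]
    · simp [FunExt.chi, hν, hx, E.one_ne_zero.symm]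
  rw [hfun, ← E.comp, h, E.star_extends]
  simp [hν]

end Aux2

section Aux3

variable {X S : Type*} (E : FunExt X S)

lemma star_fix (hdir : E.Directed) {A : Set X} {u : X → X}
    (hu : ∀ x, u x = x ↔ x ∈ A) {ξ : S} :
    E.star (E.chi A) ξ = E.inc E.one ↔ E.star u ξ = ξ := by
  rw [chi_eq_diag E hdir A u hu ξ]
  split_ifs with h
  · exact iff_of_true rfl h
  · exact iff_of_false (fun he => ne_inc_one_zero E he.symm) h

lemma repr_spec (ρ : X → X) (hρ : ∀ x, ρ x ≠ x) (A : Set X) :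
    ∀ x, (fun x => if x ∈ A then x else ρ x) x = x ↔ x ∈ A := by
  intro x
  simp only []
  split_ifs with h
  · exact iff_of_true rfl h
  · exact iff_of_false (hρ x) h

lemma inter_repr (ρ : X → X) (hρ : ∀ x, ρ x ≠ x) (hρρ : ∀ x, ρ (ρ x) ≠ x) (A B : Set X) :
    ∀ x, ((fun x => if x ∈ A then x else ρ x) ∘ fun x => if x ∈ B then x else ρ x) x = x
      ↔ x ∈ A ∩ B := by
  intro x
  simp only [Function.comp_apply]
  by_cases hxB : x ∈ B
  · rw [if_pos hxB]
    by_cases hxA : x ∈ A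
    · rw [if_pos hxA]; exact iff_of_true rfl ⟨hxA, hxB⟩
    · rw [if_neg hxA]; exact iff_of_false (hρ x) (fun h => hxA h.1)
  · rw [if_neg hxB]
    by_cases hA2 : ρ x ∈ A
    · rw [if_pos hA2]; exact iff_of_false (hρ x) (fun h => hxB h.2)
    · rw [if_neg hA2]; exact iff_of_false (hρρ x) (fun h => hxB h.2)

include E in
lemma exists_rho (c : X) (hc0 : c ≠ E.zero) (hc1 : c ≠ E.one) :
    ∃ ρ : X → X, (∀ x, ρ x ≠ x) ∧ (∀ x, ρ (ρ x) ≠ x) := by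
  refine ⟨fun x => if x = E.zero then E.one else if x = E.one then c else E.zero, ?_, ?_⟩
  · intro x
    simp only []
    by_cases h0 : x = E.zero
    · subst h0; simp [E.one_ne_zero]
    · by_cases h1 : x = E.one
      · subst h1; simp [h0, hc1]
      · rw [if_neg h0, if_neg h1]
        exact fun h => h0 h.symm
  · intro x
    simp only []
    by_cases h0 : x = E.zero
    · subst h0
      simp [E.one_ne_zero, hc0]
    · by_cases h1 : x = E.one
      · subst h1
        simp [h0, hc0, hc1, Ne.symm E.one_ne_zero]
      · simp [h0, h1, Ne.symm h1]

/-- the singleton case: if `A = {a}` then `ξ` must be the standard point `a`. -/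
lemma singleton_case (hdir : E.Directed) (A B : Set X) (ξ : S) (a : X)
    (hAa : ∀ x, x ∈ A ↔ x = a)
    (hA : E.star (E.chi A) ξ = E.inc E.one) (hB : E.star (E.chi B) ξ = E.inc E.one) :
    E.star (E.chi (A ∩ B)) ξ = E.inc E.one := by
  classical
  have hfun : E.chi A = fun x => if id x = (fun _ : X => a) x then E.one else E.zero := by
    funext x
    simp only [FunExt.chi, hAa x, id_eq]
  have h2 : E.star (E.chi A) ξ = if ξ = E.inc a then E.inc E.one else E.inc E.zero := by
    rw [hfun, E.diag, star_id E hdir, star_const]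
  rw [h2] at hA
  have hξ : ξ = E.inc a := by
    by_contra h
    rw [if_neg h] at hA
    exact ne_inc_one_zero E hA.symm
  rw [hξ] at hB ⊢
  rw [E.star_extends] at hB ⊢
  have hc : E.chi B a = E.one := E.inc_inj hB
  have haB : a ∈ B := by
    by_contra h
    rw [show E.chi B a = E.zero from if_neg h] at hc
    exact E.one_ne_zero hc.symm
  congr 1
  exact if_pos ⟨(hAa a).mpr rfl, haB⟩

lemma star_chi_inter (hdir : E.Directed) (A B : Set X) (ξ : S)
    (hA : E.star (E.chi A) ξ = E.inc E.one)
    (hB : E.star (E.chi B) ξ = E.inc E.one) :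
    E.star (E.chi (A ∩ B)) ξ = E.inc E.one := by
  classical
  by_cases hbig : ∃ c : X, c ≠ E.zero ∧ c ≠ E.one
  · obtain ⟨c, hc0, hc1⟩ := hbig
    obtain ⟨ρ, hρ, hρρ⟩ := exists_rho E c hc0 hc1
    have hA' := (star_fix E hdir (repr_spec ρ hρ A)).mp hA
    have hB' := (star_fix E hdir (repr_spec ρ hρ B)).mp hB
    have hcomp := E.comp (fun x => if x ∈ B then x else ρ x)
      (fun x => if x ∈ A then x else ρ x) ξ
    rw [hB'] at hcomp
    exact (star_fix E hdir (inter_repr ρ hρ hρρ A B)).mpr (hcomp.symm.trans hA')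
  · push_neg at hbig
    have hsmall : ∀ x : X, x = E.zero ∨ x = E.one := by
      intro x
      by_cases h : x = E.zero
      · exact Or.inl h
      · exact Or.inr (hbig x h)
    by_cases h0 : E.zero ∈ A <;> by_cases h1 : E.one ∈ A
    · have hU : A = Set.univ := Set.eq_univ_of_forall (fun x => by
        rcases hsmall x with h | h <;> rw [h] <;> assumption)
      rw [hU, Set.univ_inter]
      exact hB
    · refine singleton_case E hdir A B ξ E.zero (fun x => ?_) hA hB
      rcases hsmall x with h | h <;> subst h
      · exact iff_of_true h0 rfl
      · exact iff_of_false h1 E.one_ne_zero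
    · refine singleton_case E hdir A B ξ E.one (fun x => ?_) hA hB
      rcases hsmall x with h | h <;> subst h
      · exact iff_of_false h0 (fun h => E.one_ne_zero h.symm)
      · exact iff_of_true h1 rfl
    · have hE : A = ∅ := Set.eq_empty_iff_forall_notMem.mpr (fun x hx => by
        rcases hsmall x with h | h <;> rw [h] at hx
        · exact h0 hx
        · exact h1 hx)
      rw [hE, star_chi_empty] at hA
      exact absurd hA.symm (ne_inc_one_zero E)

end Aux3

section Aux4

variable {X S : Type*} (E : FunExt X S)

lemma star_chi_union (hdir : E.Directed) (A B : Set X) (ξ : S)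
    (h : E.star (E.chi (A ∪ B)) ξ = E.inc E.one) :
    E.star (E.chi A) ξ = E.inc E.one ∨ E.star (E.chi B) ξ = E.inc E.one := by
  by_contra hcon
  push_neg at hcon
  obtain ⟨hA, hB⟩ := hcon
  have hA0 : E.star (E.chi A) ξ = E.inc E.zero :=
    (star_chi_mem_or E hdir A ξ).resolve_left hA
  have hB0 : E.star (E.chi B) ξ = E.inc E.zero :=
    (star_chi_mem_or E hdir B ξ).resolve_left hB
  have h1 := star_chi_compl_of_zero E A ξ hA0
  have h2 := star_chi_compl_of_zero E B ξ hB0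
  have h3 := star_chi_inter E hdir Aᶜ Bᶜ ξ h1 h2
  have h4 : E.star (E.chi ((A ∪ B)ᶜ)) ξ = E.inc E.one := by
    rw [Set.compl_union]; exact h3
  have h5 := star_chi_compl_of_one E (A ∪ B) ξ h
  exact ne_inc_one_zero E (h4.symm.trans h5)

lemma star_chi_foldr (hdir : E.Directed) :
    ∀ (l : List (Set X)) (ξ : S),
      E.star (E.chi (l.foldr (· ∪ ·) ∅)) ξ = E.inc E.one →
        ∃ A ∈ l, E.star (E.chi A) ξ = E.inc E.one := by
  intro l
  induction l with
  | nil =>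
    intro ξ h
    rw [List.foldr_nil, star_chi_empty] at h
    exact absurd h.symm (ne_inc_one_zero E)
  | cons A l ih =>
    intro ξ h
    rw [List.foldr_cons] at h
    rcases star_chi_union E hdir _ _ ξ h with h' | h'
    · exact ⟨A, List.mem_cons_self, h'⟩
    · obtain ⟨B, hBl, hB⟩ := ih ξ h'
      exact ⟨B, List.mem_cons_of_mem _ hBl, hB⟩

lemma mem_foldr : ∀ (l : List (Set X)) (B : Set X), B ∈ l → ∀ x, x ∈ B →
    x ∈ l.foldr (· ∪ ·) ∅ := by
  intro l
  induction l with
  | nil => intro B hB; simp at hB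
  | cons A l ih =>
    intro B hB x hx
    rw [List.foldr_cons]
    rcases List.mem_cons.mp hB with h | h
    · exact Or.inl (h ▸ hx)
    · exact Or.inr (ih B h x hx)

end Aux4

/-- `X` is dense in `*X` for the Star-topology: if the basic
Star-closed set `E(f₁,…,fₙ; η₁,…,ηₙ)` contains (the copy of) `X`,
then it is all of `*X`. -/
theorem stmt_18 {X S : Type*} (E : FunExt X S) (hdir : E.Directed)
    (n : ℕ) (f : Fin n → (X → X)) (η : Fin n → S)
    (hX : ∀ x : X, ∃ i : Fin n, E.star (f i) (E.inc x) = η i) :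
    ∀ ξ : S, ∃ i : Fin n, E.star (f i) ξ = η i := by
  intro ξ
  classical
  set A : Fin n → Set X := fun i => {x | E.star (f i) (E.inc x) = η i} with hAdef
  have hcov : (List.ofFn A).foldr (· ∪ ·) ∅ = Set.univ := by
    apply Set.eq_univ_of_forall
    intro x
    obtain ⟨i, hi⟩ := hX x
    exact mem_foldr _ (A i) ((List.mem_ofFn (f := A) (a := A i)).mpr ⟨i, rfl⟩) x hi
  have h1 : E.star (E.chi ((List.ofFn A).foldr (· ∪ ·) ∅)) ξ = E.inc E.one := by
    rw [hcov]; exact star_chi_univ E ξ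
  obtain ⟨B, hBmem, hB⟩ := star_chi_foldr E hdir _ ξ h1
  obtain ⟨i, hi⟩ := (List.mem_ofFn (f := A) (a := B)).mp hBmem
  refine ⟨i, ?_⟩
  rw [← hi] at hB
  rcases Set.eq_empty_or_nonempty (A i) with he | ⟨x₀, hx₀⟩
  · rw [he, star_chi_empty] at hB
    exact absurd hB.symm (ne_inc_one_zero E)
  · have hη : η i = E.inc (f i x₀) := by
      have := hx₀
      rw [hAdef] at this
      simp only [Set.mem_setOf_eq] at this
      rw [← this, E.star_extends]
    have hset : ∀ x, x ∈ A i ↔ f i x = f i x₀ := by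
      intro x
      rw [hAdef]
      simp only [Set.mem_setOf_eq]
      rw [E.star_extends, hη]
      exact ⟨fun h => E.inc_inj h, fun h => by rw [h]⟩
    have hfun : E.chi (A i) = fun x => if f i x = (fun _ : X => f i x₀) x then E.one else E.zero := by
      funext x
      simp only [FunExt.chi, hset x]
    rw [hfun, E.diag, star_const] at hB
    have hfin : E.star (f i) ξ = E.inc (f i x₀) := by
      by_contra hne
      rw [if_neg hne] at hB
      exact ne_inc_one_zero E hB.symm
    rw [hfin, hη]
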